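/- Let ν, ν̃ ∈ M₊(ℝ), let H > 0 and let h : ℝ → ℝ be a measurable function with |h(x)| ≤ H for all x ∈ ℝ. Then |∫_ℝ h(x) B₀[ν](dx) − ∫_ℝ h(x) B₀[ν̃](dx)| ≤ 3H ‖ν − ν̃‖_{TV}, where ‖·‖_{TV} denotes the total variation norm. -/

import Mathlib

open MeasureTheory Set Filter

/-- The trait-mixing (reproduction) operator `B₀`: the pushforward of `(1/ρ)·(ν ⊗ ν)`
under `(z₁, z₂) ↦ (z₁ + z₂)/2`, where `ρ = ν(ℝ)`, and `0` if `ν` is not finite. -/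
noncomputable def B0 (ν : Measure ℝ) : Measure ℝ := by
  classical
  exact if h : IsFiniteMeasure ν then
    haveI := h
    Measure.map (fun p : ℝ × ℝ => (p.1 + p.2) / 2) ((ν Set.univ)⁻¹ • ν.prod ν)
  else 0

/-- Total variation distance between two finite measures, via duality with
measurable functions bounded by `1`. -/
noncomputable def tvDist (μ ν : Measure ℝ) : ℝ :=
  ⨆ h : {h : ℝ → ℝ // Measurable h ∧ ∀ x, |h x| ≤ 1},
    |(∫ x, h.1 x ∂μ) - ∫ x, h.1 x ∂ν|

/-- `f` is a weak (measure) solution of `∂ₜ f = B₀[f] − m f` on `[0, T]`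
with initial datum `f0`: it takes values in finite nonnegative measures, is
continuous in time for the total variation norm, and satisfies the Duhamel
formula on every Borel set. -/
def IsWeakSolution (m : ℝ → ℝ) (f0 : Measure ℝ) (T : ℝ) (f : ℝ → Measure ℝ) : Prop :=
  (∀ t ∈ Set.Icc 0 T, IsFiniteMeasure (f t)) ∧
  (∀ t ∈ Set.Icc 0 T,
    Filter.Tendsto (fun s => tvDist (f s) (f t)) (nhdsWithin t (Set.Icc 0 T)) (nhds 0)) ∧
  (∀ A : Set ℝ, MeasurableSet A → ∀ t ∈ Set.Icc 0 T,
    f t A = (∫⁻ x in A, ENNReal.ofReal (Real.exp (-(m x) * t)) ∂f0)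
      + ∫⁻ s in Set.Icc 0 t,
          ∫⁻ x in A, ENNReal.ofReal (Real.exp (-(m x) * (t - s))) ∂(B0 (f s)))

/-- A weak solution on `[0, T]` for every `T > 0`, i.e. on `[0, ∞)`. -/
def IsWeakSolutionGlobal (m : ℝ → ℝ) (f0 : Measure ℝ) (f : ℝ → Measure ℝ) : Prop :=
  ∀ T > 0, IsWeakSolution m f0 T f

section Aux

variable (μ ν : Measure ℝ) [IsFiniteMeasure μ] [IsFiniteMeasure ν]

lemma tv_bdd : BddAbove (Set.range fun g : {h : ℝ → ℝ // Measurable h ∧ ∀ x, |h x| ≤ 1} =>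
    |(∫ x, g.1 x ∂μ) - ∫ x, g.1 x ∂ν|) := by
  refine ⟨(μ univ).toReal + (ν univ).toReal, ?_⟩
  rintro r ⟨⟨g, hgm, hgb⟩, rfl⟩
  have h1 : ‖∫ x, g x ∂μ‖ ≤ 1 * (μ univ).toReal :=
    norm_integral_le_of_norm_le_const (ae_of_all _ fun x => by simpa using hgb x)
  have h2 : ‖∫ x, g x ∂ν‖ ≤ 1 * (ν univ).toReal :=
    norm_integral_le_of_norm_le_const (ae_of_all _ fun x => by simpa using hgb x)
  have h3 : |(∫ x, g x ∂μ) - ∫ x, g x ∂ν| ≤ ‖∫ x, g x ∂μ‖ + ‖∫ x, g x ∂ν‖ := by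
    simpa using norm_sub_le (∫ x, g x ∂μ) (∫ x, g x ∂ν)
  simp only
  linarith

lemma le_tv (g : ℝ → ℝ) (hgm : Measurable g) (hgb : ∀ x, |g x| ≤ 1) :
    |(∫ x, g x ∂μ) - ∫ x, g x ∂ν| ≤ tvDist μ ν :=
  le_ciSup (tv_bdd μ ν) ⟨g, hgm, hgb⟩

lemma tv_nonneg : 0 ≤ tvDist μ ν := by
  have := le_tv μ ν (fun _ => 0) measurable_const (by simp)
  simpa using this

lemma le_tv_smul (H : ℝ) (hH : 0 < H) (g : ℝ → ℝ) (hgm : Measurable g)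
    (hgb : ∀ x, |g x| ≤ H) :
    |(∫ x, g x ∂μ) - ∫ x, g x ∂ν| ≤ H * tvDist μ ν := by
  have h1 : |(∫ x, H⁻¹ * g x ∂μ) - ∫ x, H⁻¹ * g x ∂ν| ≤ tvDist μ ν := by
    refine le_tv μ ν _ (measurable_const.mul hgm) fun x => ?_
    rw [abs_mul, abs_of_pos (inv_pos.2 hH)]
    calc H⁻¹ * |g x| ≤ H⁻¹ * H := by
          exact mul_le_mul_of_nonneg_left (hgb x) (inv_pos.2 hH).le
      _ = 1 := inv_mul_cancel₀ hH.ne'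
  rw [integral_const_mul, integral_const_mul, ← mul_sub, abs_mul,
    abs_of_pos (inv_pos.2 hH)] at h1
  calc |(∫ x, g x ∂μ) - ∫ x, g x ∂ν|
      = H * (H⁻¹ * |(∫ x, g x ∂μ) - ∫ x, g x ∂ν|) := by
        field_simp
    _ ≤ H * tvDist μ ν := mul_le_mul_of_nonneg_left h1 hH.le

lemma mass_diff : |(μ univ).toReal - (ν univ).toReal| ≤ tvDist μ ν := by
  have := le_tv μ ν (fun _ => 1) measurable_const (by simp)
  simpa [integral_const, measureReal_def] using this

lemma B0_eq : B0 ν = Measure.map (fun p : ℝ × ℝ => (p.1 + p.2) / 2)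
    ((ν Set.univ)⁻¹ • ν.prod ν) := by
  unfold B0
  rw [dif_pos ‹IsFiniteMeasure ν›]

lemma integral_B0 (h : ℝ → ℝ) (hmeas : Measurable h) :
    ∫ x, h x ∂(B0 ν)
      = ((ν univ).toReal)⁻¹ * ∫ p : ℝ × ℝ, h ((p.1 + p.2) / 2) ∂(ν.prod ν) := by
  rw [B0_eq, integral_map (by fun_prop) hmeas.aestronglyMeasurable,
    integral_smul_measure, ENNReal.toReal_inv, smul_eq_mul]

lemma inv_mul_bound (ρ D C : ℝ) (hρ : 0 ≤ ρ) (hC : 0 ≤ C) (hD : |D| ≤ C * ρ) :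
    |ρ⁻¹ * D| ≤ C := by
  rcases eq_or_lt_of_le hρ with h | h
  · simp [← h, hC]
  · rw [abs_mul, abs_of_pos (inv_pos.2 h)]
    calc ρ⁻¹ * |D| ≤ ρ⁻¹ * (C * ρ) := mul_le_mul_of_nonneg_left hD (inv_pos.2 h).le
      _ = C := by field_simp

end Aux

/-- **TV-contraction estimate for `B₀`.** For finite nonnegative measures `ν, ν̃` and any
measurable `h` with `|h| ≤ H`, one has
`|∫ h dB₀[ν] − ∫ h dB₀[ν̃]| ≤ 3 H ‖ν − ν̃‖_TV`. -/
theorem B0_tv_contraction (ν νt : Measure ℝ) [IsFiniteMeasure ν] [IsFiniteMeasure νt]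
    (H : ℝ) (hH : 0 < H) (h : ℝ → ℝ) (hmeas : Measurable h) (hb : ∀ x, |h x| ≤ H) :
    |(∫ x, h x ∂(B0 ν)) - ∫ x, h x ∂(B0 νt)| ≤ 3 * H * tvDist ν νt := by
  set g : ℝ × ℝ → ℝ := fun p => h ((p.1 + p.2) / 2) with hg
  have hgm : Measurable g := hmeas.comp (by fun_prop)
  have hgint : ∀ (μ ξ : Measure ℝ) [IsFiniteMeasure μ] [IsFiniteMeasure ξ],
      Integrable g (μ.prod ξ) := by
    intro μ ξ _ _
    exact ⟨hgm.aestronglyMeasurable,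
      HasFiniteIntegral.of_bounded (C := H) (ae_of_all _ fun p => by simpa using hb _)⟩
  set ρ : ℝ := (ν univ).toReal with hρdef
  set σ : ℝ := (νt univ).toReal with hσdef
  have hρ0 : 0 ≤ ρ := ENNReal.toReal_nonneg
  have hσ0 : 0 ≤ σ := ENNReal.toReal_nonneg
  have htv0 : 0 ≤ tvDist ν νt := tv_nonneg ν νt
  set I11 : ℝ := ∫ p, g p ∂(ν.prod ν) with hI11def
  set I12 : ℝ := ∫ p, g p ∂(ν.prod νt) with hI12def
  set I22 : ℝ := ∫ p, g p ∂(νt.prod νt) with hI22def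
  have hL : (∫ x, h x ∂(B0 ν)) - ∫ x, h x ∂(B0 νt) = ρ⁻¹ * I11 - σ⁻¹ * I22 := by
    rw [integral_B0 ν h hmeas, integral_B0 νt h hmeas]
  -- term 1
  have hT1 : |ρ⁻¹ * (I11 - I12)| ≤ H * tvDist ν νt := by
    have hinner : ∀ x : ℝ, |(∫ y, h ((x + y) / 2) ∂ν) - ∫ y, h ((x + y) / 2) ∂νt|
        ≤ H * tvDist ν νt := fun x =>
      le_tv_smul ν νt H hH _ (hmeas.comp (by fun_prop)) fun y => hb _
    have e1 : I11 = ∫ x, ∫ y, h ((x + y) / 2) ∂ν ∂ν := integral_prod _ (hgint ν ν)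
    have e2 : I12 = ∫ x, ∫ y, h ((x + y) / 2) ∂νt ∂ν := integral_prod _ (hgint ν νt)
    have esub : I11 - I12
        = ∫ x, ((∫ y, h ((x + y) / 2) ∂ν) - ∫ y, h ((x + y) / 2) ∂νt) ∂ν := by
      rw [e1, e2, ← integral_sub ((hgint ν ν).integral_prod_left)
        ((hgint ν νt).integral_prod_left)]
    have hbnd : |I11 - I12| ≤ (H * tvDist ν νt) * ρ := by
      rw [esub]
      have := norm_integral_le_of_norm_le_const (μ := ν) (C := H * tvDist ν νt)
        (f := fun x => (∫ y, h ((x + y) / 2) ∂ν) - ∫ y, h ((x + y) / 2) ∂νt)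
        (ae_of_all _ fun x => by rw [Real.norm_eq_abs]; exact hinner x)
      rwa [Real.norm_eq_abs] at this
    exact inv_mul_bound ρ _ _ hρ0 (by positivity) hbnd
  -- term 2
  have hT2 : |σ⁻¹ * (I12 - I22)| ≤ H * tvDist ν νt := by
    have hinner : ∀ y : ℝ, |(∫ x, h ((x + y) / 2) ∂ν) - ∫ x, h ((x + y) / 2) ∂νt|
        ≤ H * tvDist ν νt := fun y =>
      le_tv_smul ν νt H hH _ (hmeas.comp (by fun_prop)) fun x => hb _
    have e1 : I12 = ∫ y, ∫ x, h ((x + y) / 2) ∂ν ∂νt := integral_prod_symm _ (hgint ν νt)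
    have e2 : I22 = ∫ y, ∫ x, h ((x + y) / 2) ∂νt ∂νt := integral_prod_symm _ (hgint νt νt)
    have esub : I12 - I22
        = ∫ y, ((∫ x, h ((x + y) / 2) ∂ν) - ∫ x, h ((x + y) / 2) ∂νt) ∂νt := by
      rw [e1, e2, ← integral_sub ((hgint ν νt).integral_prod_right)
        ((hgint νt νt).integral_prod_right)]
    have hbnd : |I12 - I22| ≤ (H * tvDist ν νt) * σ := by
      rw [esub]
      have := norm_integral_le_of_norm_le_const (μ := νt) (C := H * tvDist ν νt)
        (f := fun y => (∫ x, h ((x + y) / 2) ∂ν) - ∫ x, h ((x + y) / 2) ∂νt)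
        (ae_of_all _ fun y => by rw [Real.norm_eq_abs]; exact hinner y)
      rwa [Real.norm_eq_abs] at this
    exact inv_mul_bound σ _ _ hσ0 (by positivity) hbnd
  -- term 3
  have hT3 : |(ρ⁻¹ - σ⁻¹) * I12| ≤ H * tvDist ν νt := by
    rcases eq_or_lt_of_le hρ0 with hρz | hρp
    · have hν0 : ν = 0 := by
        have : ν univ = 0 := by
          have hfin : ν univ ≠ ⊤ := measure_ne_top ν univ
          have h0 : (ν univ).toReal = 0 := by rw [← hρdef]; exact hρz.symm
          exact ((ENNReal.toReal_eq_zero_iff _).1 h0).resolve_right hfin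
        exact Measure.measure_univ_eq_zero.1 this
      have : I12 = 0 := by rw [hI12def, hν0, Measure.zero_prod]; simp
      rw [this, mul_zero, abs_zero]
      positivity
    rcases eq_or_lt_of_le hσ0 with hσz | hσp
    · have hν0 : νt = 0 := by
        have : νt univ = 0 := by
          have hfin : νt univ ≠ ⊤ := measure_ne_top νt univ
          have h0 : (νt univ).toReal = 0 := by rw [← hσdef]; exact hσz.symm
          exact ((ENNReal.toReal_eq_zero_iff _).1 h0).resolve_right hfin
        exact Measure.measure_univ_eq_zero.1 this
      have : I12 = 0 := by
        rw [hI12def, hν0, Measure.prod_zero]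
        simp
      rw [this, mul_zero, abs_zero]
      positivity
    · have hmass : ((ν.prod νt) univ).toReal = ρ * σ := by
        rw [← Set.univ_prod_univ, Measure.prod_prod, ENNReal.toReal_mul]
      have hI12b : |I12| ≤ H * (ρ * σ) := by
        have := norm_integral_le_of_norm_le_const (μ := ν.prod νt) (f := g)
          (ae_of_all _ fun p => by simpa using hb _)
        rw [measureReal_def, hmass] at this
        simpa [mul_assoc] using this
      have hinv : |ρ⁻¹ - σ⁻¹| = |σ - ρ| / (ρ * σ) := by
        rw [← abs_of_pos (mul_pos hρp hσp), ← abs_div]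
        congr 1
        field_simp
      have hmd : |σ - ρ| ≤ tvDist ν νt := by
        rw [abs_sub_comm]
        exact mass_diff ν νt
      calc |(ρ⁻¹ - σ⁻¹) * I12| = |ρ⁻¹ - σ⁻¹| * |I12| := abs_mul _ _
        _ ≤ (|σ - ρ| / (ρ * σ)) * (H * (ρ * σ)) := by
            rw [hinv]
            exact mul_le_mul_of_nonneg_left hI12b (by positivity)
        _ = H * |σ - ρ| := by field_simp
        _ ≤ H * tvDist ν νt := mul_le_mul_of_nonneg_left hmd hH.le
  have key : ρ⁻¹ * I11 - σ⁻¹ * I22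
      = ρ⁻¹ * (I11 - I12) + σ⁻¹ * (I12 - I22) + (ρ⁻¹ - σ⁻¹) * I12 := by ring
  rw [hL, key]
  calc |ρ⁻¹ * (I11 - I12) + σ⁻¹ * (I12 - I22) + (ρ⁻¹ - σ⁻¹) * I12|
      ≤ |ρ⁻¹ * (I11 - I12) + σ⁻¹ * (I12 - I22)| + |(ρ⁻¹ - σ⁻¹) * I12| := abs_add_le _ _
    _ ≤ |ρ⁻¹ * (I11 - I12)| + |σ⁻¹ * (I12 - I22)| + |(ρ⁻¹ - σ⁻¹) * I12| := by
        have := abs_add_le (ρ⁻¹ * (I11 - I12)) (σ⁻¹ * (I12 - I22))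
        linarith
    _ ≤ 3 * H * tvDist ν νt := by linarith
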